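/- Let c, e ∈ ℂ with c ≠ 0 and e ≠ 0, let D₃(x) = 2ex² + c, and let N₃,₁(x) = 6ex² − c, N₃,₂(x) = x(−3c + 2ex²), N₃,₃(x) = (c³ + 6ec²x² + 16e³x⁶)·x⁻³. Suppose K₁, K₂, K₃ ∈ ℂ are such that the function y = (K₁N₃,₁ + K₂N₃,₂ + K₃N₃,₃)/D₃³ satisfies the nonlinear equation (NL3): 72exy² + (2cx + 4ex³)(y')² + (14c + 84ex²)yy' + (2cx + 4ex³)yy'' = 0 at every point of some nonempty open subset U ⊆ ℂ on which x ≠ 0 and D₃ does not vanish. Then K₁ = K₂ = K₃ = 0. -/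

import Mathlib

set_option maxHeartbeats 2000000

private lemma st16_hd6 (A0 A2 A3 A4 A5 A6 t : ℂ) :
    HasDerivAt (fun s : ℂ => A0 + A2 * s ^ 2 + A3 * s ^ 3 + A4 * s ^ 4 + A5 * s ^ 5 + A6 * s ^ 6)
      (2 * A2 * t ^ 1 + 3 * A3 * t ^ 2 + 4 * A4 * t ^ 3 + 5 * A5 * t ^ 4 + 6 * A6 * t ^ 5) t := by
  have h := (((((hasDerivAt_const t A0).add ((hasDerivAt_pow 2 t).const_mul A2)).add
    ((hasDerivAt_pow 3 t).const_mul A3)).add ((hasDerivAt_pow 4 t).const_mul A4)).add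
    ((hasDerivAt_pow 5 t).const_mul A5)).add ((hasDerivAt_pow 6 t).const_mul A6)
  refine h.congr_deriv ?_
  push_cast
  ring

private lemma st16_hdg (B3 B5 B7 B9 t : ℂ) :
    HasDerivAt (fun s : ℂ => B3 * s ^ 3 + B5 * s ^ 5 + B7 * s ^ 7 + B9 * s ^ 9)
      (3 * B3 * t ^ 2 + 5 * B5 * t ^ 4 + 7 * B7 * t ^ 6 + 9 * B9 * t ^ 8) t := by
  have h := ((((hasDerivAt_pow 3 t).const_mul B3).add ((hasDerivAt_pow 5 t).const_mul B5)).add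
    ((hasDerivAt_pow 7 t).const_mul B7)).add ((hasDerivAt_pow 9 t).const_mul B9)
  refine h.congr_deriv ?_
  push_cast
  ring

private lemma st16_hd14 (B2 B4 B6 B7 B8 B9 B10 B11 B12 B13 B14 t : ℂ) :
    HasDerivAt (fun s : ℂ => B2 * s ^ 2 + B4 * s ^ 4 + B6 * s ^ 6 + B7 * s ^ 7 + B8 * s ^ 8
        + B9 * s ^ 9 + B10 * s ^ 10 + B11 * s ^ 11 + B12 * s ^ 12 + B13 * s ^ 13 + B14 * s ^ 14)
      (2 * B2 * t ^ 1 + 4 * B4 * t ^ 3 + 6 * B6 * t ^ 5 + 7 * B7 * t ^ 6 + 8 * B8 * t ^ 7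
        + 9 * B9 * t ^ 8 + 10 * B10 * t ^ 9 + 11 * B11 * t ^ 10 + 12 * B12 * t ^ 11
        + 13 * B13 * t ^ 12 + 14 * B14 * t ^ 13) t := by
  have h := ((((((((((((hasDerivAt_pow 2 t).const_mul B2).add ((hasDerivAt_pow 4 t).const_mul B4)).add
    ((hasDerivAt_pow 6 t).const_mul B6)).add ((hasDerivAt_pow 7 t).const_mul B7)).add
    ((hasDerivAt_pow 8 t).const_mul B8)).add ((hasDerivAt_pow 9 t).const_mul B9)).add
    ((hasDerivAt_pow 10 t).const_mul B10)).add ((hasDerivAt_pow 11 t).const_mul B11)).add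
    ((hasDerivAt_pow 12 t).const_mul B12)).add ((hasDerivAt_pow 13 t).const_mul B13)).add
    ((hasDerivAt_pow 14 t).const_mul B14))
  refine h.congr_deriv ?_
  push_cast
  ring

private lemma st16_key (c e K₁ K₂ K₃ : ℂ) (U : Set ℂ) (hU : IsOpen U)
    (hx0 : ∀ z ∈ U, z ≠ 0) (hDne : ∀ z ∈ U, 2 * e * z ^ 2 + c ≠ 0)
    (y : ℂ → ℂ)
    (hyf : ∀ w ∈ U, y w = ((1 * c^3 * K₃) + (6 * c^2 * e * K₃) * w^2 + (-1 * c * K₁) * w^3 + (-3 * c * K₂) * w^4 + (6 * e * K₁) * w^5 + (2 * e * K₂ + 16 * e^3 * K₃) * w^6) / ((1 * c^3) * w^3 + (6 * c^2 * e) * w^5 + (12 * c * e^2) * w^7 + (8 * e^3) * w^9))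
    (z : ℂ) (hz : z ∈ U)
    (hNL : 72 * e * z * (y z) ^ 2
        + (2 * c * z + 4 * e * z ^ 3) * (deriv y z) ^ 2
        + (14 * c + 84 * e * z ^ 2) * y z * deriv y z
        + (2 * c * z + 4 * e * z ^ 3) * y z * iteratedDeriv 2 y z = 0) :
    (-96 * c^12 * e * K₃^2) * z^7 + (18 * c^11 * K₁ * K₃) * z^8 + (48 * c^11 * K₂ * K₃ - 2112 * c^11 * e^2 * K₃^2) * z^9 + (372 * c^10 * e * K₁ * K₃) * z^10 + (1152 * c^10 * e * K₂ * K₃ - 20736 * c^10 * e^3 * K₃^2) * z^11 + (42 * c^9 * K₁ * K₂ + 3456 * c^9 * e^2 * K₁ * K₃) * z^12 + (-312 * c^8 * e * K₁^2 + 144 * c^9 * K₂^2 + 14016 * c^9 * e^2 * K₂ * K₃ - 115200 * c^9 * e^4 * K₃^2) * z^13 + (-1332 * c^8 * e * K₁ * K₂ + 8352 * c^8 * e^3 * K₁ * K₃) * z^14 + (-768 * c^7 * e^2 * K₁^2 + 96 * c^8 * e * K₂^2 + 86016 * c^8 * e^3 * K₂ * K₃ - 417792 * c^8 * e^5 * K₃^2)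 * z^15 + (-13152 * c^7 * e^2 * K₁ * K₂ - 45120 * c^7 * e^4 * K₁ * K₃) * z^16 + (12672 * c^6 * e^3 * K₁^2 - 9216 * c^7 * e^2 * K₂^2 + 290304 * c^7 * e^4 * K₂ * K₃ - 1124352 * c^7 * e^6 * K₃^2) * z^17 + (-29760 * c^6 * e^3 * K₁ * K₂ - 320640 * c^6 * e^5 * K₁ * K₃) * z^18 + (76800 * c^5 * e^4 * K₁^2 - 54528 * c^6 * e^3 * K₂^2 + 595968 * c^6 * e^5 * K₂ * K₃ - 2420736 * c^6 * e^7 * K₃^2) * z^19 + (66240 * c^5 * e^4 * K₁ * K₂ - 815616 * c^5 * e^6 * K₁ * K₃) * z^20 + (142080 * c^4 * e^5 * K₁^2 - 127488 * c^5 * e^4 * K₂^2 + 915456 * c^5 * e^6 * K₂ * K₃ - 4030464 * c^5 * e^8 * K₃^2) * z^21 + (426624 * c^4 * e^5 * K₁ * K₂ - 1210368 * c^4 * e^7 * K₁ * K₃) * z^22 + (-36864 * c^3 * e^6 * K₁^2 - 110592 * c^4 * e^5 * K₂^2 + 1400832 * c^4 * e^7 * K₂ * K₃ - 4792320 * c^4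 * e^9 * K₃^2) * z^23 + (754176 * c^3 * e^6 * K₁ * K₂ - 1752576 * c^3 * e^8 * K₁ * K₃) * z^24 + (-485376 * c^2 * e^7 * K₁^2 + 49152 * c^3 * e^6 * K₂^2 + 1830912 * c^3 * e^8 * K₂ * K₃ - 4276224 * c^3 * e^10 * K₃^2) * z^25 + (470016 * c^2 * e^7 * K₁ * K₂ - 2903040 * c^2 * e^9 * K₁ * K₃) * z^26 + (-638976 * c * e^8 * K₁^2 + 135168 * c^2 * e^7 * K₂^2 + 1179648 * c^2 * e^9 * K₂ * K₃ - 3932160 * c^2 * e^11 * K₃^2) * z^27 + (-99840 * c * e^8 * K₁ * K₂ - 3121152 * c * e^10 * K₁ * K₃) * z^28 + (-276480 * e^9 * K₁^2 + 36864 * c * e^8 * K₂^2 - 147456 * c * e^10 * K₂ * K₃ - 3538944 * c * e^12 * K₃^2) * z^29 + (-168960 * e^9 * K₁ * K₂ - 1351680 * e^11 * K₁ * K₃) * z^30 + (-24576 * e^9 * K₂^2 - 393216 * e^11 * K₂ * K₃ - 1572864 * e^13 * K₃^2) * z^31 = 0 := by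
  have hgne : ∀ w ∈ U, ((1 * c^3) * w^3 + (6 * c^2 * e) * w^5 + (12 * c * e^2) * w^7 + (8 * e^3) * w^9) ≠ 0 := by
    intro w hw
    have h1 : ((1 * c^3) * w^3 + (6 * c^2 * e) * w^5 + (12 * c * e^2) * w^7 + (8 * e^3) * w^9) = w ^ 3 * (2 * e * w ^ 2 + c) ^ 3 := by ring
    rw [h1]
    exact mul_ne_zero (pow_ne_zero _ (hx0 w hw)) (pow_ne_zero _ (hDne w hw))
  have hder : ∀ w ∈ U, HasDerivAt y (((-3 * c^6 * K₃) * w^2 + (-36 * c^5 * e * K₃) * w^4 + (-3 * c^4 * K₂ - 192 * c^4 * e^2 * K₃) * w^6 + (24 * c^3 * e * K₁) * w^7 + (24 * c^3 * e * K₂ - 384 * c^3 * e^3 * K₃) * w^8 + (48 * c^2 * e^2 * K₁) * w^9 + (120 * c^2 * e^2 * K₂ - 240 * c^2 * e^4 * K₃) * w^10 + (-96 * c * e^3 * K₁) * w^11 + (96 * c * e^3 * K₂ - 192 * c * e^5 * K₃) * w^12 + (-192 * e^4 * K₁) * w^13 + (-48 * e^4 * K₂ - 384 * e^6 * K₃)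 * w^14) / ((1 * c^3) * w^3 + (6 * c^2 * e) * w^5 + (12 * c * e^2) * w^7 + (8 * e^3) * w^9) ^ 2) w := by
    intro w hw
    have hp : HasDerivAt (fun s : ℂ => (1 * c^3 * K₃) + (6 * c^2 * e * K₃) * s^2 + (-1 * c * K₁) * s^3 + (-3 * c * K₂) * s^4 + (6 * e * K₁) * s^5 + (2 * e * K₂ + 16 * e^3 * K₃) * s^6) (2 * (6 * c^2 * e * K₃) * w^1 + 3 * (-1 * c * K₁) * w^2 + 4 * (-3 * c * K₂) * w^3 + 5 * (6 * e * K₁) * w^4 + 6 * (2 * e * K₂ + 16 * e^3 * K₃) * w^5) w := st16_hd6 _ _ _ _ _ _ w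
    have hg : HasDerivAt (fun s : ℂ => (1 * c^3) * s^3 + (6 * c^2 * e) * s^5 + (12 * c * e^2) * s^7 + (8 * e^3) * s^9) (3 * (1 * c^3) * w^2 + 5 * (6 * c^2 * e) * w^4 + 7 * (12 * c * e^2) * w^6 + 9 * (8 * e^3) * w^8) w := st16_hdg _ _ _ _ w
    have hf : HasDerivAt (fun s : ℂ => ((1 * c^3 * K₃) + (6 * c^2 * e * K₃) * s^2 + (-1 * c * K₁) * s^3 + (-3 * c * K₂) * s^4 + (6 * e * K₁) * s^5 + (2 * e * K₂ + 16 * e^3 * K₃) * s^6) / ((1 * c^3) * s^3 + (6 * c^2 * e) * s^5 + (12 * c * e^2) * s^7 + (8 * e^3) * s^9))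
        (((2 * (6 * c^2 * e * K₃) * w^1 + 3 * (-1 * c * K₁) * w^2 + 4 * (-3 * c * K₂) * w^3 + 5 * (6 * e * K₁) * w^4 + 6 * (2 * e * K₂ + 16 * e^3 * K₃) * w^5) * ((1 * c^3) * w^3 + (6 * c^2 * e) * w^5 + (12 * c * e^2) * w^7 + (8 * e^3) * w^9) - ((1 * c^3 * K₃) + (6 * c^2 * e * K₃) * w^2 + (-1 * c * K₁) * w^3 + (-3 * c * K₂) * w^4 + (6 * e * K₁) * w^5 + (2 * e * K₂ + 16 * e^3 * K₃) * w^6) * (3 * (1 * c^3) * w^2 + 5 * (6 * c^2 * e) * w^4 + 7 * (12 * c * e^2) * w^6 + 9 * (8 * e^3) * w^8)) / ((1 * c^3) * w^3 + (6 * c^2 * e) * w^5 + (12 * c * e^2) * w^7 + (8 * e^3) * w^9) ^ 2) w :=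
      hp.div hg (hgne w hw)
    have hnum : (2 * (6 * c^2 * e * K₃) * w^1 + 3 * (-1 * c * K₁) * w^2 + 4 * (-3 * c * K₂) * w^3 + 5 * (6 * e * K₁) * w^4 + 6 * (2 * e * K₂ + 16 * e^3 * K₃) * w^5) * ((1 * c^3) * w^3 + (6 * c^2 * e) * w^5 + (12 * c * e^2) * w^7 + (8 * e^3) * w^9) - ((1 * c^3 * K₃) + (6 * c^2 * e * K₃) * w^2 + (-1 * c * K₁) * w^3 + (-3 * c * K₂) * w^4 + (6 * e * K₁) * w^5 + (2 * e * K₂ + 16 * e^3 * K₃) * w^6) * (3 * (1 * c^3) * w^2 + 5 * (6 * c^2 * e) * w^4 + 7 * (12 * c * e^2) * w^6 + 9 * (8 * e^3) * w^8) = ((-3 * c^6 * K₃) * w^2 + (-36 * c^5 * e * K₃) * w^4 + (-3 * c^4 * K₂ - 192 * c^4 * e^2 * K₃) * w^6 + (24 * c^3 * e * K₁) * w^7 + (24 * c^3 * e * K₂ - 384 * c^3 * e^3 * K₃) * w^8 + (48 * c^2 * e^2 * K₁) * w^9 + (120 * c^2 * e^2 * K₂ - 240 * c^2 * e^4 * K₃)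 * w^10 + (-96 * c * e^3 * K₁) * w^11 + (96 * c * e^3 * K₂ - 192 * c * e^5 * K₃) * w^12 + (-192 * e^4 * K₁) * w^13 + (-48 * e^4 * K₂ - 384 * e^6 * K₃) * w^14) := by ring
    rw [hnum] at hf
    refine hf.congr_of_eventuallyEq ?_
    filter_upwards [hU.mem_nhds hw] with u hu
    exact hyf u hu
  have hY : y z = ((1 * c^3 * K₃) + (6 * c^2 * e * K₃) * z^2 + (-1 * c * K₁) * z^3 + (-3 * c * K₂) * z^4 + (6 * e * K₁) * z^5 + (2 * e * K₂ + 16 * e^3 * K₃) * z^6) / ((1 * c^3) * z^3 + (6 * c^2 * e) * z^5 + (12 * c * e^2) * z^7 + (8 * e^3) * z^9) := hyf z hz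
  have hY' : deriv y z = ((-3 * c^6 * K₃) * z^2 + (-36 * c^5 * e * K₃) * z^4 + (-3 * c^4 * K₂ - 192 * c^4 * e^2 * K₃) * z^6 + (24 * c^3 * e * K₁) * z^7 + (24 * c^3 * e * K₂ - 384 * c^3 * e^3 * K₃) * z^8 + (48 * c^2 * e^2 * K₁) * z^9 + (120 * c^2 * e^2 * K₂ - 240 * c^2 * e^4 * K₃) * z^10 + (-96 * c * e^3 * K₁) * z^11 + (96 * c * e^3 * K₂ - 192 * c * e^5 * K₃) * z^12 + (-192 * e^4 * K₁) * z^13 + (-48 * e^4 * K₂ - 384 * e^6 * K₃) * z^14) / ((1 * c^3) * z^3 + (6 * c^2 * e) * z^5 + (12 * c * e^2) * z^7 + (8 * e^3) * z^9) ^ 2 := (hder z hz).deriv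
  have hgz : ((1 * c^3) * z^3 + (6 * c^2 * e) * z^5 + (12 * c * e^2) * z^7 + (8 * e^3) * z^9) ≠ 0 := hgne z hz
  have hY'' : iteratedDeriv 2 y z =
      ((2 * (-3 * c^6 * K₃) * z^1 + 4 * (-36 * c^5 * e * K₃) * z^3 + 6 * (-3 * c^4 * K₂ - 192 * c^4 * e^2 * K₃) * z^5 + 7 * (24 * c^3 * e * K₁) * z^6 + 8 * (24 * c^3 * e * K₂ - 384 * c^3 * e^3 * K₃) * z^7 + 9 * (48 * c^2 * e^2 * K₁) * z^8 + 10 * (120 * c^2 * e^2 * K₂ - 240 * c^2 * e^4 * K₃) * z^9 + 11 * (-96 * c * e^3 * K₁) * z^10 + 12 * (96 * c * e^3 * K₂ - 192 * c * e^5 * K₃) * z^11 + 13 * (-192 * e^4 * K₁) * z^12 + 14 * (-48 * e^4 * K₂ - 384 * e^6 * K₃) * z^13) * ((1 * c^3) * z^3 + (6 * c^2 * e) * z^5 + (12 * c * e^2) * z^7 + (8 * e^3) * z^9) - 2 * ((-3 * c^6 * K₃) * z^2 + (-36 * c^5 * e * K₃) * z^4 + (-3 * c^4 * K₂ - 192 *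 c^4 * e^2 * K₃) * z^6 + (24 * c^3 * e * K₁) * z^7 + (24 * c^3 * e * K₂ - 384 * c^3 * e^3 * K₃) * z^8 + (48 * c^2 * e^2 * K₁) * z^9 + (120 * c^2 * e^2 * K₂ - 240 * c^2 * e^4 * K₃) * z^10 + (-96 * c * e^3 * K₁) * z^11 + (96 * c * e^3 * K₂ - 192 * c * e^5 * K₃) * z^12 + (-192 * e^4 * K₁) * z^13 + (-48 * e^4 * K₂ - 384 * e^6 * K₃) * z^14) * (3 * (1 * c^3) * z^2 + 5 * (6 * c^2 * e) * z^4 + 7 * (12 * c * e^2) * z^6 + 9 * (8 * e^3) * z^8)) / ((1 * c^3) * z^3 + (6 * c^2 * e) * z^5 + (12 * c * e^2) * z^7 + (8 * e^3) * z^9) ^ 3 := by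
    rw [iteratedDeriv_succ, iteratedDeriv_one]
    have hdd : deriv y =ᶠ[nhds z] fun s : ℂ => ((-3 * c^6 * K₃) * s^2 + (-36 * c^5 * e * K₃) * s^4 + (-3 * c^4 * K₂ - 192 * c^4 * e^2 * K₃) * s^6 + (24 * c^3 * e * K₁) * s^7 + (24 * c^3 * e * K₂ - 384 * c^3 * e^3 * K₃) * s^8 + (48 * c^2 * e^2 * K₁) * s^9 + (120 * c^2 * e^2 * K₂ - 240 * c^2 * e^4 * K₃) * s^10 + (-96 * c * e^3 * K₁) * s^11 + (96 * c * e^3 * K₂ - 192 * c * e^5 * K₃) * s^12 + (-192 * e^4 * K₁) * s^13 + (-48 * e^4 * K₂ - 384 * e^6 * K₃) * s^14) / ((1 * c^3) * s^3 + (6 * c^2 * e) * s^5 + (12 * c * e^2) * s^7 + (8 * e^3) * s^9) ^ 2 := by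
      filter_upwards [hU.mem_nhds hz] with u hu
      exact (hder u hu).deriv
    rw [hdd.deriv_eq]
    have hq : HasDerivAt (fun s : ℂ => (-3 * c^6 * K₃) * s^2 + (-36 * c^5 * e * K₃) * s^4 + (-3 * c^4 * K₂ - 192 * c^4 * e^2 * K₃) * s^6 + (24 * c^3 * e * K₁) * s^7 + (24 * c^3 * e * K₂ - 384 * c^3 * e^3 * K₃) * s^8 + (48 * c^2 * e^2 * K₁) * s^9 + (120 * c^2 * e^2 * K₂ - 240 * c^2 * e^4 * K₃) * s^10 + (-96 * c * e^3 * K₁) * s^11 + (96 * c * e^3 * K₂ - 192 * c * e^5 * K₃) * s^12 + (-192 * e^4 * K₁) * s^13 + (-48 * e^4 * K₂ - 384 * e^6 * K₃) * s^14) (2 * (-3 * c^6 * K₃) * z^1 + 4 * (-36 * c^5 * e * K₃) * z^3 + 6 * (-3 * c^4 * K₂ - 192 * c^4 * e^2 * K₃) * z^5 + 7 * (24 * c^3 * e * K₁) * z^6 + 8 * (24 * c^3 * e * K₂ - 384 * c^3 * e^3 * K₃) * z^7 + 9 * (48 * c^2 * e^2 * K₁) * z^8 + 10 * (120 * c^2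 * e^2 * K₂ - 240 * c^2 * e^4 * K₃) * z^9 + 11 * (-96 * c * e^3 * K₁) * z^10 + 12 * (96 * c * e^3 * K₂ - 192 * c * e^5 * K₃) * z^11 + 13 * (-192 * e^4 * K₁) * z^12 + 14 * (-48 * e^4 * K₂ - 384 * e^6 * K₃) * z^13) z :=
      st16_hd14 _ _ _ _ _ _ _ _ _ _ _ z
    have hg : HasDerivAt (fun s : ℂ => (1 * c^3) * s^3 + (6 * c^2 * e) * s^5 + (12 * c * e^2) * s^7 + (8 * e^3) * s^9) (3 * (1 * c^3) * z^2 + 5 * (6 * c^2 * e) * z^4 + 7 * (12 * c * e^2) * z^6 + 9 * (8 * e^3) * z^8) z := st16_hdg _ _ _ _ z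
    have hg2 : HasDerivAt (fun s : ℂ => ((1 * c^3) * s^3 + (6 * c^2 * e) * s^5 + (12 * c * e^2) * s^7 + (8 * e^3) * s^9) ^ 2) (2 * ((1 * c^3) * z^3 + (6 * c^2 * e) * z^5 + (12 * c * e^2) * z^7 + (8 * e^3) * z^9) * (3 * (1 * c^3) * z^2 + 5 * (6 * c^2 * e) * z^4 + 7 * (12 * c * e^2) * z^6 + 9 * (8 * e^3) * z^8)) z := by
      have h2 := hg.pow 2
      refine h2.congr_deriv ?_
      push_cast
      ring
    have hdiv : HasDerivAt (fun s : ℂ => ((-3 * c^6 * K₃) * s^2 + (-36 * c^5 * e * K₃) * s^4 + (-3 * c^4 * K₂ - 192 * c^4 * e^2 * K₃) * s^6 + (24 * c^3 * e * K₁) * s^7 + (24 * c^3 * e * K₂ - 384 * c^3 * e^3 * K₃) * s^8 + (48 * c^2 * e^2 * K₁) * s^9 + (120 * c^2 * e^2 * K₂ - 240 * c^2 * e^4 * K₃) * s^10 + (-96 * c * e^3 * K₁) * s^11 + (96 * c * e^3 * K₂ - 192 * c * e^5 * K₃) * s^12 + (-192 * e^4 * K₁) * s^13 + (-48 * e^4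 * K₂ - 384 * e^6 * K₃) * s^14) / ((1 * c^3) * s^3 + (6 * c^2 * e) * s^5 + (12 * c * e^2) * s^7 + (8 * e^3) * s^9) ^ 2)
        (((2 * (-3 * c^6 * K₃) * z^1 + 4 * (-36 * c^5 * e * K₃) * z^3 + 6 * (-3 * c^4 * K₂ - 192 * c^4 * e^2 * K₃) * z^5 + 7 * (24 * c^3 * e * K₁) * z^6 + 8 * (24 * c^3 * e * K₂ - 384 * c^3 * e^3 * K₃) * z^7 + 9 * (48 * c^2 * e^2 * K₁) * z^8 + 10 * (120 * c^2 * e^2 * K₂ - 240 * c^2 * e^4 * K₃) * z^9 + 11 * (-96 * c * e^3 * K₁) * z^10 + 12 * (96 * c * e^3 * K₂ - 192 * c * e^5 * K₃) * z^11 + 13 * (-192 * e^4 * K₁) * z^12 + 14 * (-48 * e^4 * K₂ - 384 * e^6 * K₃) * z^13) * ((1 * c^3) * z^3 + (6 * c^2 * e) * z^5 + (12 * c * e^2) * z^7 + (8 * e^3) * z^9) ^ 2 - ((-3 * c^6 * K₃) * z^2 + (-36 * c^5 * e * K₃) * z^4 + (-3 * c^4 * K₂ - 192 * c^4 * e^2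 * K₃) * z^6 + (24 * c^3 * e * K₁) * z^7 + (24 * c^3 * e * K₂ - 384 * c^3 * e^3 * K₃) * z^8 + (48 * c^2 * e^2 * K₁) * z^9 + (120 * c^2 * e^2 * K₂ - 240 * c^2 * e^4 * K₃) * z^10 + (-96 * c * e^3 * K₁) * z^11 + (96 * c * e^3 * K₂ - 192 * c * e^5 * K₃) * z^12 + (-192 * e^4 * K₁) * z^13 + (-48 * e^4 * K₂ - 384 * e^6 * K₃) * z^14) * (2 * ((1 * c^3) * z^3 + (6 * c^2 * e) * z^5 + (12 * c * e^2) * z^7 + (8 * e^3) * z^9) * (3 * (1 * c^3) * z^2 + 5 * (6 * c^2 * e) * z^4 + 7 * (12 * c * e^2) * z^6 + 9 * (8 * e^3) * z^8))) / (((1 * c^3) * z^3 + (6 * c^2 * e) * z^5 + (12 * c * e^2) * z^7 + (8 * e^3) * z^9) ^ 2) ^ 2) z :=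
      hq.div hg2 (pow_ne_zero 2 hgz)
    rw [hdiv.deriv]
    rw [div_eq_div_iff (pow_ne_zero 2 (pow_ne_zero 2 hgz)) (pow_ne_zero 3 hgz)]
    ring
  have e1 : y z * ((1 * c^3) * z^3 + (6 * c^2 * e) * z^5 + (12 * c * e^2) * z^7 + (8 * e^3) * z^9) = ((1 * c^3 * K₃) + (6 * c^2 * e * K₃) * z^2 + (-1 * c * K₁) * z^3 + (-3 * c * K₂) * z^4 + (6 * e * K₁) * z^5 + (2 * e * K₂ + 16 * e^3 * K₃) * z^6) := by
    rw [hY]; exact div_mul_cancel₀ _ hgz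
  have e2 : deriv y z * ((1 * c^3) * z^3 + (6 * c^2 * e) * z^5 + (12 * c * e^2) * z^7 + (8 * e^3) * z^9) ^ 2 = ((-3 * c^6 * K₃) * z^2 + (-36 * c^5 * e * K₃) * z^4 + (-3 * c^4 * K₂ - 192 * c^4 * e^2 * K₃) * z^6 + (24 * c^3 * e * K₁) * z^7 + (24 * c^3 * e * K₂ - 384 * c^3 * e^3 * K₃) * z^8 + (48 * c^2 * e^2 * K₁) * z^9 + (120 * c^2 * e^2 * K₂ - 240 * c^2 * e^4 * K₃) * z^10 + (-96 * c * e^3 * K₁) * z^11 + (96 * c * e^3 * K₂ - 192 * c * e^5 * K₃) * z^12 + (-192 * e^4 * K₁) * z^13 + (-48 * e^4 * K₂ - 384 * e^6 * K₃) * z^14) := by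
    rw [hY']; exact div_mul_cancel₀ _ (pow_ne_zero 2 hgz)
  have e3 : iteratedDeriv 2 y z * ((1 * c^3) * z^3 + (6 * c^2 * e) * z^5 + (12 * c * e^2) * z^7 + (8 * e^3) * z^9) ^ 3 = (2 * (-3 * c^6 * K₃) * z^1 + 4 * (-36 * c^5 * e * K₃) * z^3 + 6 * (-3 * c^4 * K₂ - 192 * c^4 * e^2 * K₃) * z^5 + 7 * (24 * c^3 * e * K₁) * z^6 + 8 * (24 * c^3 * e * K₂ - 384 * c^3 * e^3 * K₃) * z^7 + 9 * (48 * c^2 * e^2 * K₁) * z^8 + 10 * (120 * c^2 * e^2 * K₂ - 240 * c^2 * e^4 * K₃) * z^9 + 11 * (-96 * c * e^3 * K₁) * z^10 + 12 * (96 * c * e^3 * K₂ - 192 * c * e^5 * K₃) * z^11 + 13 * (-192 * e^4 * K₁) * z^12 + 14 * (-48 * e^4 * K₂ - 384 * e^6 * K₃) * z^13) * ((1 * c^3) * z^3 + (6 * c^2 * e) * z^5 + (12 * c * e^2) * z^7 + (8 * e^3) * z^9) - 2 * ((-3 * c^6 * K₃) * z^2 + (-36 * c^5 * e * K₃) * z^4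 + (-3 * c^4 * K₂ - 192 * c^4 * e^2 * K₃) * z^6 + (24 * c^3 * e * K₁) * z^7 + (24 * c^3 * e * K₂ - 384 * c^3 * e^3 * K₃) * z^8 + (48 * c^2 * e^2 * K₁) * z^9 + (120 * c^2 * e^2 * K₂ - 240 * c^2 * e^4 * K₃) * z^10 + (-96 * c * e^3 * K₁) * z^11 + (96 * c * e^3 * K₂ - 192 * c * e^5 * K₃) * z^12 + (-192 * e^4 * K₁) * z^13 + (-48 * e^4 * K₂ - 384 * e^6 * K₃) * z^14) * (3 * (1 * c^3) * z^2 + 5 * (6 * c^2 * e) * z^4 + 7 * (12 * c * e^2) * z^6 + 9 * (8 * e^3) * z^8) := by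
    rw [hY'']; exact div_mul_cancel₀ _ (pow_ne_zero 3 hgz)
  linear_combination (((1 * c^3) * z^3 + (6 * c^2 * e) * z^5 + (12 * c * e^2) * z^7 + (8 * e^3) * z^9) ^ 4) * hNL
    - (72 * e * z * ((1 * c^3) * z^3 + (6 * c^2 * e) * z^5 + (12 * c * e^2) * z^7 + (8 * e^3) * z^9) ^ 2 * (y z * ((1 * c^3) * z^3 + (6 * c^2 * e) * z^5 + (12 * c * e^2) * z^7 + (8 * e^3) * z^9) + ((1 * c^3 * K₃) + (6 * c^2 * e * K₃) * z^2 + (-1 * c * K₁) * z^3 + (-3 * c * K₂) * z^4 + (6 * e * K₁) * z^5 + (2 * e * K₂ + 16 * e^3 * K₃) * z^6))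
        + (14 * c + 84 * e * z ^ 2) * ((1 * c^3) * z^3 + (6 * c^2 * e) * z^5 + (12 * c * e^2) * z^7 + (8 * e^3) * z^9) ^ 3 * deriv y z
        + (2 * c * z + 4 * e * z ^ 3) * ((1 * c^3) * z^3 + (6 * c^2 * e) * z^5 + (12 * c * e^2) * z^7 + (8 * e^3) * z^9) ^ 3 * iteratedDeriv 2 y z) * e1
    - ((2 * c * z + 4 * e * z ^ 3) * (deriv y z * ((1 * c^3) * z^3 + (6 * c^2 * e) * z^5 + (12 * c * e^2) * z^7 + (8 * e^3) * z^9) ^ 2 + ((-3 * c^6 * K₃) * z^2 + (-36 * c^5 * e * K₃) * z^4 + (-3 * c^4 * K₂ - 192 * c^4 * e^2 * K₃) * z^6 + (24 * c^3 * e * K₁) * z^7 + (24 * c^3 * e * K₂ - 384 * c^3 * e^3 * K₃) * z^8 + (48 * c^2 * e^2 * K₁) * z^9 + (120 * c^2 * e^2 * K₂ - 240 * c^2 * e^4 * K₃) * z^10 + (-96 * c * e^3 * K₁) * z^11 + (96 * c * e^3 * K₂ - 192 * c * e^5 * K₃) * z^12 + (-192 * e^4 * K₁) * z^13 + (-48 *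 e^4 * K₂ - 384 * e^6 * K₃) * z^14))
        + (14 * c + 84 * e * z ^ 2) * ((1 * c^3) * z^3 + (6 * c^2 * e) * z^5 + (12 * c * e^2) * z^7 + (8 * e^3) * z^9) * ((1 * c^3 * K₃) + (6 * c^2 * e * K₃) * z^2 + (-1 * c * K₁) * z^3 + (-3 * c * K₂) * z^4 + (6 * e * K₁) * z^5 + (2 * e * K₂ + 16 * e^3 * K₃) * z^6)) * e2
    - ((2 * c * z + 4 * e * z ^ 3) * ((1 * c^3 * K₃) + (6 * c^2 * e * K₃) * z^2 + (-1 * c * K₁) * z^3 + (-3 * c * K₂) * z^4 + (6 * e * K₁) * z^5 + (2 * e * K₂ + 16 * e^3 * K₃) * z^6)) * e3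

/-- Let `c, e` be nonzero, `D₃(x) = 2ex² + c`, and let
`N₃,₁, N₃,₂, N₃,₃` be the explicit solutions of (L3). If
`y = (K₁N₃,₁ + K₂N₃,₂ + K₃N₃,₃)/D₃³` satisfies the nonlinear equation (NL3):
`72exy² + (2cx+4ex³)(y')² + (14c+84ex²)yy' + (2cx+4ex³)yy'' = 0`
on some nonempty open set `U` on which `x ≠ 0` and `D₃` does not vanish,
then `K₁ = K₂ = K₃ = 0`. -/
theorem statement16
    (c e : ℂ) (hc : c ≠ 0) (he : e ≠ 0)
    (D₃ N₃₁ N₃₂ N₃₃ : ℂ → ℂ)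
    (hD₃ : ∀ x : ℂ, D₃ x = 2 * e * x ^ 2 + c)
    (hN₃₁ : ∀ x : ℂ, N₃₁ x = 6 * e * x ^ 2 - c)
    (hN₃₂ : ∀ x : ℂ, N₃₂ x = x * (-3 * c + 2 * e * x ^ 2))
    (hN₃₃ : ∀ x : ℂ, N₃₃ x = (c ^ 3 + 6 * e * c ^ 2 * x ^ 2 + 16 * e ^ 3 * x ^ 6) / x ^ 3)
    (K₁ K₂ K₃ : ℂ)
    (y : ℂ → ℂ)
    (hy : ∀ x : ℂ, y x = (K₁ * N₃₁ x + K₂ * N₃₂ x + K₃ * N₃₃ x) / D₃ x ^ 3)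
    (U : Set ℂ) (hU : IsOpen U) (hUne : U.Nonempty)
    (hx0 : ∀ x ∈ U, x ≠ 0)
    (hDU : ∀ x ∈ U, D₃ x ≠ 0)
    (hNL3 : ∀ x ∈ U,
      72 * e * x * (y x) ^ 2
        + (2 * c * x + 4 * e * x ^ 3) * (deriv y x) ^ 2
        + (14 * c + 84 * e * x ^ 2) * y x * deriv y x
        + (2 * c * x + 4 * e * x ^ 3) * y x * iteratedDeriv 2 y x = 0) :
    K₁ = 0 ∧ K₂ = 0 ∧ K₃ = 0 := by
  have hDne : ∀ z ∈ U, 2 * e * z ^ 2 + c ≠ 0 := by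
    intro z hz
    have h := hDU z hz
    rwa [hD₃ z] at h
  have hyf : ∀ w ∈ U, y w = ((1 * c^3 * K₃) + (6 * c^2 * e * K₃) * w^2 + (-1 * c * K₁) * w^3 + (-3 * c * K₂) * w^4 + (6 * e * K₁) * w^5 + (2 * e * K₂ + 16 * e^3 * K₃) * w^6) / ((1 * c^3) * w^3 + (6 * c^2 * e) * w^5 + (12 * c * e^2) * w^7 + (8 * e^3) * w^9) := by
    intro w hw
    have hww : w ≠ 0 := hx0 w hw
    have hdw : 2 * e * w ^ 2 + c ≠ 0 := hDne w hw
    have hgw : ((1 * c^3) * w^3 + (6 * c^2 * e) * w^5 + (12 * c * e^2) * w^7 + (8 * e^3) * w^9) ≠ 0 := by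
      have h1 : ((1 * c^3) * w^3 + (6 * c^2 * e) * w^5 + (12 * c * e^2) * w^7 + (8 * e^3) * w^9) = w ^ 3 * (2 * e * w ^ 2 + c) ^ 3 := by ring
      rw [h1]
      exact mul_ne_zero (pow_ne_zero _ hww) (pow_ne_zero _ hdw)
    rw [hy w, hN₃₁ w, hN₃₂ w, hN₃₃ w, hD₃ w,
      div_eq_div_iff (pow_ne_zero 3 hdw) hgw]
    field_simp [hww]
    ring
  have hkey : ∀ z ∈ U, (-96 * c^12 * e * K₃^2) * z^7 + (18 * c^11 * K₁ * K₃) * z^8 + (48 * c^11 * K₂ * K₃ - 2112 * c^11 * e^2 * K₃^2) * z^9 + (372 * c^10 * e * K₁ * K₃) * z^10 + (1152 * c^10 * e * K₂ * K₃ - 20736 * c^10 * e^3 * K₃^2) * z^11 + (42 * c^9 * K₁ * K₂ + 3456 * c^9 * e^2 * K₁ * K₃) * z^12 + (-312 * c^8 * e * K₁^2 + 144 * c^9 * K₂^2 + 14016 * c^9 * e^2 * K₂ * K₃ - 115200 * c^9 * e^4 * K₃^2) * z^13 + (-1332 * c^8 * e * K₁ * K₂ + 8352 * c^8 * e^3 *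 K₁ * K₃) * z^14 + (-768 * c^7 * e^2 * K₁^2 + 96 * c^8 * e * K₂^2 + 86016 * c^8 * e^3 * K₂ * K₃ - 417792 * c^8 * e^5 * K₃^2) * z^15 + (-13152 * c^7 * e^2 * K₁ * K₂ - 45120 * c^7 * e^4 * K₁ * K₃) * z^16 + (12672 * c^6 * e^3 * K₁^2 - 9216 * c^7 * e^2 * K₂^2 + 290304 * c^7 * e^4 * K₂ * K₃ - 1124352 * c^7 * e^6 * K₃^2) * z^17 + (-29760 * c^6 * e^3 * K₁ * K₂ - 320640 * c^6 * e^5 * K₁ * K₃) * z^18 + (76800 * c^5 * e^4 * K₁^2 - 54528 * c^6 * e^3 * K₂^2 + 595968 * c^6 * e^5 * K₂ * K₃ - 2420736 * c^6 * e^7 * K₃^2) * z^19 + (66240 * c^5 * e^4 * K₁ * K₂ - 815616 * c^5 * e^6 * K₁ * K₃) * z^20 + (142080 * c^4 * e^5 * K₁^2 - 127488 * c^5 * e^4 * K₂^2 + 915456 * c^5 * e^6 * K₂ * K₃ - 4030464 * c^5 * e^8 * K₃^2) * z^21 + (426624 * c^4 * e^5 * K₁ * K₂ - 1210368 * c^4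 * e^7 * K₁ * K₃) * z^22 + (-36864 * c^3 * e^6 * K₁^2 - 110592 * c^4 * e^5 * K₂^2 + 1400832 * c^4 * e^7 * K₂ * K₃ - 4792320 * c^4 * e^9 * K₃^2) * z^23 + (754176 * c^3 * e^6 * K₁ * K₂ - 1752576 * c^3 * e^8 * K₁ * K₃) * z^24 + (-485376 * c^2 * e^7 * K₁^2 + 49152 * c^3 * e^6 * K₂^2 + 1830912 * c^3 * e^8 * K₂ * K₃ - 4276224 * c^3 * e^10 * K₃^2) * z^25 + (470016 * c^2 * e^7 * K₁ * K₂ - 2903040 * c^2 * e^9 * K₁ * K₃) * z^26 + (-638976 * c * e^8 * K₁^2 + 135168 * c^2 * e^7 * K₂^2 + 1179648 * c^2 * e^9 * K₂ * K₃ - 3932160 * c^2 * e^11 * K₃^2) * z^27 + (-99840 * c * e^8 * K₁ * K₂ - 3121152 * c * e^10 * K₁ * K₃) * z^28 + (-276480 * e^9 * K₁^2 + 36864 * c * e^8 * K₂^2 - 147456 * c * e^10 * K₂ * K₃ - 3538944 * c * e^12 * K₃^2) * z^29 + (-168960 * e^9 * K₁ * K₂ - 1351680 * e^11 * K₁ *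 K₃) * z^30 + (-24576 * e^9 * K₂^2 - 393216 * e^11 * K₂ * K₃ - 1572864 * e^13 * K₃^2) * z^31 = 0 := fun z hz =>
    st16_key c e K₁ K₂ K₃ U hU hx0 hDne y hyf z hz (hNL3 z hz)
  have hUinf : U.Infinite := by
    obtain ⟨x₀, hx₀⟩ := hUne
    exact infinite_of_mem_nhds x₀ (hU.mem_nhds hx₀)
  set Qp : Polynomial ℂ := Polynomial.C (-96 * c^12 * e * K₃^2) * Polynomial.X ^ 7 + Polynomial.C (18 * c^11 * K₁ * K₃) * Polynomial.X ^ 8 + Polynomial.C (48 * c^11 * K₂ * K₃ - 2112 * c^11 * e^2 * K₃^2) * Polynomial.X ^ 9 + Polynomial.C (372 * c^10 * e * K₁ * K₃) * Polynomial.X ^ 10 + Polynomial.C (1152 * c^10 * e * K₂ * K₃ - 20736 * c^10 * e^3 * K₃^2) * Polynomial.X ^ 11 + Polynomial.C (42 * c^9 * K₁ * K₂ + 3456 * c^9 * e^2 * K₁ * K₃) * Polynomial.X ^ 12 + Polynomial.C (-312 * c^8 * e * K₁^2 + 144 * c^9 * K₂^2 + 14016 * c^9 * e^2 * K₂ * K₃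 - 115200 * c^9 * e^4 * K₃^2) * Polynomial.X ^ 13 + Polynomial.C (-1332 * c^8 * e * K₁ * K₂ + 8352 * c^8 * e^3 * K₁ * K₃) * Polynomial.X ^ 14 + Polynomial.C (-768 * c^7 * e^2 * K₁^2 + 96 * c^8 * e * K₂^2 + 86016 * c^8 * e^3 * K₂ * K₃ - 417792 * c^8 * e^5 * K₃^2) * Polynomial.X ^ 15 + Polynomial.C (-13152 * c^7 * e^2 * K₁ * K₂ - 45120 * c^7 * e^4 * K₁ * K₃) * Polynomial.X ^ 16 + Polynomial.C (12672 * c^6 * e^3 * K₁^2 - 9216 * c^7 * e^2 * K₂^2 + 290304 * c^7 * e^4 * K₂ * K₃ - 1124352 * c^7 * e^6 * K₃^2) * Polynomial.X ^ 17 + Polynomial.C (-29760 * c^6 * e^3 * K₁ * K₂ - 320640 * c^6 * e^5 * K₁ * K₃) * Polynomial.X ^ 18 + Polynomial.C (76800 * c^5 * e^4 * K₁^2 - 54528 * c^6 * e^3 * K₂^2 + 595968 * c^6 * e^5 * K₂ * K₃ - 2420736 * c^6 * e^7 * K₃^2) * Polynomial.X ^ 19 + Polynomial.C (66240 * c^5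 * e^4 * K₁ * K₂ - 815616 * c^5 * e^6 * K₁ * K₃) * Polynomial.X ^ 20 + Polynomial.C (142080 * c^4 * e^5 * K₁^2 - 127488 * c^5 * e^4 * K₂^2 + 915456 * c^5 * e^6 * K₂ * K₃ - 4030464 * c^5 * e^8 * K₃^2) * Polynomial.X ^ 21 + Polynomial.C (426624 * c^4 * e^5 * K₁ * K₂ - 1210368 * c^4 * e^7 * K₁ * K₃) * Polynomial.X ^ 22 + Polynomial.C (-36864 * c^3 * e^6 * K₁^2 - 110592 * c^4 * e^5 * K₂^2 + 1400832 * c^4 * e^7 * K₂ * K₃ - 4792320 * c^4 * e^9 * K₃^2) * Polynomial.X ^ 23 + Polynomial.C (754176 * c^3 * e^6 * K₁ * K₂ - 1752576 * c^3 * e^8 * K₁ * K₃) * Polynomial.X ^ 24 + Polynomial.C (-485376 * c^2 * e^7 * K₁^2 + 49152 * c^3 * e^6 * K₂^2 + 1830912 * c^3 * e^8 * K₂ * K₃ - 4276224 * c^3 * e^10 * K₃^2) * Polynomial.X ^ 25 + Polynomial.C (470016 * c^2 * e^7 * K₁ * K₂ - 2903040 * c^2 * e^9 * K₁ * K₃)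 * Polynomial.X ^ 26 + Polynomial.C (-638976 * c * e^8 * K₁^2 + 135168 * c^2 * e^7 * K₂^2 + 1179648 * c^2 * e^9 * K₂ * K₃ - 3932160 * c^2 * e^11 * K₃^2) * Polynomial.X ^ 27 + Polynomial.C (-99840 * c * e^8 * K₁ * K₂ - 3121152 * c * e^10 * K₁ * K₃) * Polynomial.X ^ 28 + Polynomial.C (-276480 * e^9 * K₁^2 + 36864 * c * e^8 * K₂^2 - 147456 * c * e^10 * K₂ * K₃ - 3538944 * c * e^12 * K₃^2) * Polynomial.X ^ 29 + Polynomial.C (-168960 * e^9 * K₁ * K₂ - 1351680 * e^11 * K₁ * K₃) * Polynomial.X ^ 30 + Polynomial.C (-24576 * e^9 * K₂^2 - 393216 * e^11 * K₂ * K₃ - 1572864 * e^13 * K₃^2) * Polynomial.X ^ 31 with hQp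
  have hroot : U ⊆ {z : ℂ | Qp.IsRoot z} := by
    intro z hz
    have h := hkey z hz
    simp only [Set.mem_setOf_eq, Polynomial.IsRoot.def, hQp, Polynomial.eval_add,
      Polynomial.eval_mul, Polynomial.eval_pow, Polynomial.eval_C, Polynomial.eval_X]
    linear_combination h
  have hQ0 : Qp = 0 := Polynomial.eq_zero_of_infinite_isRoot _ (hUinf.mono hroot)
  have c7 : Qp.coeff 7 = (-96 * c^12 * e * K₃^2) := by
    rw [hQp]
    simp only [Polynomial.coeff_add, Polynomial.coeff_C_mul, Polynomial.coeff_X_pow]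
    norm_num
  have c13 : Qp.coeff 13 = (-312 * c^8 * e * K₁^2 + 144 * c^9 * K₂^2 + 14016 * c^9 * e^2 * K₂ * K₃ - 115200 * c^9 * e^4 * K₃^2) := by
    rw [hQp]
    simp only [Polynomial.coeff_add, Polynomial.coeff_C_mul, Polynomial.coeff_X_pow]
    norm_num
  have c31 : Qp.coeff 31 = (-24576 * e^9 * K₂^2 - 393216 * e^11 * K₂ * K₃ - 1572864 * e^13 * K₃^2) := by
    rw [hQp]
    simp only [Polynomial.coeff_add, Polynomial.coeff_C_mul, Polynomial.coeff_X_pow]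
    norm_num
  have h7 : (-96 * c^12 * e * K₃^2) = 0 := by rw [← c7, hQ0]; simp
  have h13 : (-312 * c^8 * e * K₁^2 + 144 * c^9 * K₂^2 + 14016 * c^9 * e^2 * K₂ * K₃ - 115200 * c^9 * e^4 * K₃^2) = 0 := by rw [← c13, hQ0]; simp
  have h31 : (-24576 * e^9 * K₂^2 - 393216 * e^11 * K₂ * K₃ - 1572864 * e^13 * K₃^2) = 0 := by rw [← c31, hQ0]; simp
  have hK3 : K₃ = 0 := by
    have h96 : (96 * c ^ 12 * e) * K₃ ^ 2 = 0 := by linear_combination -h7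
    have hne : (96 * c ^ 12 * e) ≠ 0 :=
      mul_ne_zero (mul_ne_zero (by norm_num) (pow_ne_zero _ hc)) he
    have h2 := (mul_eq_zero.mp h96).resolve_left hne
    exact pow_eq_zero_iff (by norm_num) |>.mp h2
  have hK2 : K₂ = 0 := by
    have h2 : (24576 * e ^ 9) * K₂ ^ 2 = 0 := by
      linear_combination -h31 + (-393216 * e ^ 11 * K₂ - 1572864 * e ^ 13 * K₃) * hK3
    have hne : (24576 * e ^ 9) ≠ 0 := mul_ne_zero (by norm_num) (pow_ne_zero _ he)
    have h3 := (mul_eq_zero.mp h2).resolve_left hne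
    exact pow_eq_zero_iff (by norm_num) |>.mp h3
  have hK1 : K₁ = 0 := by
    have h2 : (312 * c ^ 8 * e) * K₁ ^ 2 = 0 := by
      linear_combination -h13 + (144 * c ^ 9 * K₂ + 14016 * c ^ 9 * e ^ 2 * K₃) * hK2
        + (-115200 * c ^ 9 * e ^ 4 * K₃) * hK3
    have hne : (312 * c ^ 8 * e) ≠ 0 :=
      mul_ne_zero (mul_ne_zero (by norm_num) (pow_ne_zero _ hc)) he
    have h3 := (mul_eq_zero.mp h2).resolve_left hne
    exact pow_eq_zero_iff (by norm_num) |>.mp h3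
  exact ⟨hK1, hK2, hK3⟩
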